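/- If x* solves Ax* - |x*| - b = 0, then for all x ∈ ℝ^n, ⟨A(x - x*), e(x)⟩ ≥ (1/2)[‖e(x)‖² + ⟨x - x*, (AᵀA - I)(x - x*)⟩], where e(x) = Ax - |x| - b. -/

import Mathlib

open Matrix
open scoped InnerProductSpace

/-- Componentwise absolute value of a vector. -/
def vecAbs {n : ℕ} (x : EuclideanSpace ℝ (Fin n)) : EuclideanSpace ℝ (Fin n) :=
  WithLp.toLp 2 (fun i => |x i|)

/-- If `x*` solves `Ax* - |x*| - b = 0`, then for all `x`,
`⟨A(x - x*), e(x)⟩ ≥ (1/2)[‖e(x)‖² + ⟨x - x*, (AᵀA - I)(x - x*)⟩]`,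
where `e(x) = Ax - |x| - b`. -/
theorem key_inequality (n : ℕ) (A : Matrix (Fin n) (Fin n) ℝ) (b : EuclideanSpace ℝ (Fin n))
    (xs : EuclideanSpace ℝ (Fin n))
    (hxs : Matrix.toEuclideanLin A xs - vecAbs xs - b = 0)
    (x : EuclideanSpace ℝ (Fin n)) :
    let e : EuclideanSpace ℝ (Fin n) :=
      Matrix.toEuclideanLin A x - vecAbs x - b
    ⟪Matrix.toEuclideanLin A (x - xs), e⟫_ℝ ≥
      (1 / 2) * (‖e‖ ^ 2 + (x - xs) ⬝ᵥ ((Aᵀ * A - 1).mulVec (x - xs))) := by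
  intro e
  set v : Fin n → ℝ := fun i => x i - xs i with hv
  set u : Fin n → ℝ := A *ᵥ v with hu
  set d : Fin n → ℝ := fun i => |x i| - |xs i| with hd
  -- pointwise facts
  have h0 : ∀ i, (A *ᵥ (fun j => xs j)) i - |xs i| - b i = 0 := by
    intro i
    have := congrFun (congrArg (fun y : EuclideanSpace ℝ (Fin n) => (y : Fin n → ℝ)) hxs) i
    simpa [Matrix.toEuclideanLin_apply, vecAbs, sub_eq_zero] using this
  have hAv : ∀ i, u i = (A *ᵥ (fun j => x j)) i - (A *ᵥ (fun j => xs j)) i := by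
    intro i
    simp [hu, hv, Matrix.mulVec, dotProduct, mul_sub, Finset.sum_sub_distrib]
  have he : ∀ i, e i = u i - d i := by
    intro i
    have hei : e i = (A *ᵥ (fun j => x j)) i - |x i| - b i := by
      simp [e, Matrix.toEuclideanLin_apply, vecAbs]
    rw [hei, hd, hAv i]
    simp only []
    linarith [h0 i]
  -- rewrite inner product and norm as sums
  have hinner : ⟪Matrix.toEuclideanLin A (x - xs), e⟫_ℝ = ∑ i, u i * e i := by
    rw [PiLp.inner_apply]
    refine Finset.sum_congr rfl fun i _ => ?_
    have : (Matrix.toEuclideanLin A (x - xs)) i = u i := by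
      simp only [Matrix.toEuclideanLin_apply, hu, hv]
      congr 1
    rw [this]; simp [RCLike.inner_apply, mul_comm]
  have hnorm : ‖e‖ ^ 2 = ∑ i, e i * e i := by
    rw [← real_inner_self_eq_norm_sq, PiLp.inner_apply]
    simp [RCLike.inner_apply, sq]
  have hdot : (x - xs) ⬝ᵥ ((Aᵀ * A - 1).mulVec (x - xs)) = ∑ i, u i * u i - ∑ i, v i * v i := by
    have hxv : ((x - xs : EuclideanSpace ℝ (Fin n)) : Fin n → ℝ) = v := by
      funext i; simp [hv]
    rw [hxv, Matrix.sub_mulVec, dotProduct_sub, Matrix.one_mulVec,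
      ← Matrix.mulVec_mulVec, Matrix.dotProduct_mulVec, Matrix.vecMul_transpose]
    simp [dotProduct, hu]
    rfl
  rw [hinner, hnorm, hdot, ge_iff_le, ← sub_nonneg]
  have key : ∀ i ∈ Finset.univ, (0:ℝ) ≤ v i * v i - d i * d i := by
    intro i _
    have h1 : |d i| ≤ |v i| := by
      simpa [hd, hv] using abs_abs_sub_abs_le_abs_sub (x i) (xs i)
    nlinarith [abs_nonneg (d i), abs_mul_abs_self (d i), abs_mul_abs_self (v i)]
  have hsum : (0:ℝ) ≤ ∑ i, (v i * v i - d i * d i) := Finset.sum_nonneg key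
  have hA : ∑ i, u i * e i = ∑ i, u i * u i - ∑ i, u i * d i := by
    rw [← Finset.sum_sub_distrib]
    exact Finset.sum_congr rfl fun i _ => by rw [he i]; ring
  have hB : ‖e‖ ^ 2 = ∑ i, u i * u i - 2 * ∑ i, u i * d i + ∑ i, d i * d i := by
    rw [hnorm, Finset.mul_sum, ← Finset.sum_sub_distrib, ← Finset.sum_add_distrib]
    exact Finset.sum_congr rfl fun i _ => by rw [he i]; ring
  have hC : ∑ i, (v i * v i - d i * d i) = ∑ i, v i * v i - ∑ i, d i * d i :=
    Finset.sum_sub_distrib _ _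
  rw [hnorm] at hB
  rw [hA, hB]
  rw [hC] at hsum
  linarith
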